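/- In base M = [[-1,1],[0,-1]] with digits p = (0,1)^T, z = (0,0)^T: for α, β ∈ ℕ, the word (pz)^α (zp)^β (read left to right from most significant to least significant digit) represents the vector (a, b)^T with b = β - α and a = α² + 2αβ - β² + β. -/

import Mathlib

/-- The Jordan block `[[-1,1],[0,-1]]`. -/
def M2 : Matrix (Fin 2) (Fin 2) ℤ := !![-1, 1; 0, -1]
/-- The digit `p = (0,1)ᵀ`. -/
def pd : Fin 2 → ℤ := ![0, 1]
/-- The zero digit `z = (0,0)ᵀ`. -/
def zd : Fin 2 → ℤ := ![0, 0]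
/-- The vector represented by the word `d_{k-1} … d_0`, namely `∑ M^i d_i`. -/
def val2 {k : ℕ} (d : Fin k → (Fin 2 → ℤ)) : Fin 2 → ℤ :=
  ∑ i : Fin k, (M2 ^ (i : ℕ)).mulVec (d i)
/-- The word `(pz)^α (zp)^β`, read with `d_{k-1}` leftmost:
the `2β` least significant digits alternate `… z p z p` (so `p` at even positions),
and the `2α` most significant digits alternate `p z p z …` (so `p` at odd offsets). -/
def wordA (α β : ℕ) : Fin (2 * α + 2 * β) → (Fin 2 → ℤ) := fun i =>
  if (i : ℕ) < 2 * β then (if Even (i : ℕ) then pd else zd)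
  else (if Even ((i : ℕ) - 2 * β) then zd else pd)

lemma M2_pow (n : ℕ) : M2 ^ n = !![(-1)^n, (n : ℤ) * (-1)^(n+1); 0, (-1)^n] := by
  induction n with
  | zero => simp [Matrix.one_fin_two]
  | succ n ih =>
    rw [pow_succ, ih, M2, Matrix.mul_fin_two]
    congr 1 <;> push_cast <;> ring

lemma mulVec_pd (n : ℕ) : (M2 ^ n).mulVec pd = ![(n : ℤ) * (-1)^(n+1), (-1)^n] := by
  rw [M2_pow]
  funext i
  fin_cases i <;> simp [Matrix.mulVec, dotProduct, pd, Fin.sum_univ_two]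

lemma mulVec_zd (n : ℕ) : (M2 ^ n).mulVec zd = 0 := by
  have : zd = 0 := by funext i; fin_cases i <;> simp [zd]
  rw [this, Matrix.mulVec_zero]

lemma sumA (β : ℕ) :
    ∑ i ∈ Finset.range (2 * β), (if Even i then (M2 ^ i).mulVec pd else 0)
      = ![(β : ℤ) - (β : ℤ)^2, (β : ℤ)] := by
  induction β with
  | zero => funext i; fin_cases i <;> simp
  | succ β ih =>
    have h2 : 2 * (β + 1) = (2 * β + 1) + 1 := by ring
    rw [h2, Finset.sum_range_succ, Finset.sum_range_succ, ih]
    have he : Even (2 * β) := even_two_mul β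
    have ho : ¬ Even (2 * β + 1) := by simp [Nat.even_add_one, he]
    rw [if_pos he, if_neg ho, mulVec_pd]
    have hp1 : ((-1 : ℤ))^(2*β) = 1 := by
      rw [pow_mul]; norm_num
    have hp2 : ((-1 : ℤ))^(2*β+1) = -1 := by
      rw [pow_succ, hp1]; ring
    funext i
    fin_cases i <;>
      simp [hp1, hp2, Pi.add_apply] <;> push_cast <;> ring

lemma sumB (α β : ℕ) :
    ∑ j ∈ Finset.range (2 * α), (if Even j then 0 else (M2 ^ (2 * β + j)).mulVec pd)
      = ![2 * (α : ℤ) * (β : ℤ) + (α : ℤ)^2, -(α : ℤ)] := by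
  induction α with
  | zero => funext i; fin_cases i <;> simp
  | succ α ih =>
    have h2 : 2 * (α + 1) = (2 * α + 1) + 1 := by ring
    rw [h2, Finset.sum_range_succ, Finset.sum_range_succ, ih]
    have he : Even (2 * α) := even_two_mul α
    have ho : ¬ Even (2 * α + 1) := by simp [Nat.even_add_one, he]
    rw [if_pos he, if_neg ho, mulVec_pd]
    have hp1 : ((-1 : ℤ))^(2*β + (2*α+1) + 1) = 1 := by
      have : 2*β + (2*α+1) + 1 = 2 * (β + α + 1) := by ring
      rw [this, pow_mul]; norm_num
    have hp2 : ((-1 : ℤ))^(2*β + (2*α+1)) = -1 := by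
      have : 2*β + (2*α+1) = 2 * (β + α) + 1 := by ring
      rw [this, pow_succ, pow_mul]; norm_num
    funext i
    fin_cases i <;>
      simp [hp1, hp2, Pi.add_apply] <;> push_cast <;> ring

theorem stmt13 (α β : ℕ) :
    val2 (wordA α β)
      = ![(α : ℤ) ^ 2 + 2 * (α : ℤ) * (β : ℤ) - (β : ℤ) ^ 2 + (β : ℤ),
          (β : ℤ) - (α : ℤ)] := by
  have key : val2 (wordA α β) = ∑ i ∈ Finset.range (2 * α + 2 * β),
      (M2 ^ i).mulVec (if i < 2 * β then (if Even i then pd else zd)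
        else (if Even (i - 2 * β) then zd else pd)) := by
    rw [val2]
    simp only [wordA]
    exact Fin.sum_univ_eq_sum_range (fun i => (M2 ^ i).mulVec
      (if i < 2 * β then (if Even i then pd else zd)
        else (if Even (i - 2 * β) then zd else pd))) _
  rw [key, add_comm (2*α) (2*β), Finset.sum_range_add]
  have hlow : ∑ i ∈ Finset.range (2 * β),
      (M2 ^ i).mulVec (if i < 2 * β then (if Even i then pd else zd)
        else (if Even (i - 2 * β) then zd else pd))
      = ∑ i ∈ Finset.range (2 * β), (if Even i then (M2 ^ i).mulVec pd else 0) := by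
    apply Finset.sum_congr rfl
    intro i hi
    rw [if_pos (Finset.mem_range.mp hi)]
    by_cases h : Even i <;> simp [h, mulVec_zd, zd]
  have hhigh : ∑ j ∈ Finset.range (2 * α),
      (M2 ^ (2 * β + j)).mulVec (if 2 * β + j < 2 * β then (if Even (2 * β + j) then pd else zd)
        else (if Even (2 * β + j - 2 * β) then zd else pd))
      = ∑ j ∈ Finset.range (2 * α), (if Even j then 0 else (M2 ^ (2 * β + j)).mulVec pd) := by
    apply Finset.sum_congr rfl
    intro j _
    rw [if_neg (by omega), Nat.add_sub_cancel_left]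
    by_cases h : Even j <;> simp [h, mulVec_zd, zd]
  rw [hlow, hhigh, sumA, sumB]
  funext i
  fin_cases i <;> simp [Pi.add_apply] <;> ring
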